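/- Let T be a self-adjoint linear endomorphism of V and let l_1, l_2 ∈ V be linearly independent null vectors. If either (a) T(w) = 0 for every w ∈ {l_1}⊥ and T(w) = 0 for every w ∈ {l_2}⊥, or (b) for each i ∈ {1,2} the range of T is contained in {l_i}⊥ and T maps {l_i}⊥ into ℝ·l_i, then T = 0. -/

import Mathlib

/-- If `T` is a self-adjoint endomorphism of a Lorentzian vector space `(V, g)`
and `l₁, l₂` are linearly independent null vectors such that either
(a) `T` annihilates both `{l₁}⊥` and `{l₂}⊥`, or
(b) for each `i`, the range of `T` is contained in `{lᵢ}⊥` and `T` maps `{lᵢ}⊥` into `ℝ • lᵢ`,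
then `T = 0`. -/
theorem stmt3 {V : Type*} [AddCommGroup V] [Module ℝ V]
    {n : ℕ} (hn : 2 ≤ n)
    (g : V →ₗ[ℝ] V →ₗ[ℝ] ℝ)
    (hg_symm : ∀ x y : V, g x y = g y x)
    (b : Module.Basis (Fin n) ℝ V)
    (hb : ∀ i j : Fin n, g (b i) (b j) =
      if i = j then (if (i : ℕ) = 0 then (-1 : ℝ) else 1) else 0)
    (T : V →ₗ[ℝ] V)
    (hT : ∀ x y : V, g (T x) y = g x (T y))
    (l₁ l₂ : V)
    (hl₁ : l₁ ≠ 0 ∧ g l₁ l₁ = 0) (hl₂ : l₂ ≠ 0 ∧ g l₂ l₂ = 0)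
    (hind : LinearIndependent ℝ ![l₁, l₂])
    (hcase :
      ((∀ w : V, g l₁ w = 0 → T w = 0) ∧ (∀ w : V, g l₂ w = 0 → T w = 0)) ∨
      (((∀ x : V, g l₁ (T x) = 0) ∧ (∀ w : V, g l₁ w = 0 → ∃ c : ℝ, T w = c • l₁)) ∧
       ((∀ x : V, g l₂ (T x) = 0) ∧ (∀ w : V, g l₂ w = 0 → ∃ c : ℝ, T w = c • l₂)))) :
    T = 0 := by
  obtain ⟨i0, hi0⟩ : ∃ i0 : Fin n, (i0 : ℕ) = 0 := ⟨⟨0, by omega⟩, rfl⟩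
  -- pairing with a basis vector
  have hgb : ∀ (i : Fin n) (w : V), g (b i) w =
      (if (i : ℕ) = 0 then (-1:ℝ) else 1) * b.repr w i := by
    intro i w
    conv_lhs => rw [← b.sum_repr w]
    rw [map_sum, Finset.sum_eq_single i]
    · rw [map_smul, smul_eq_mul, hb]; simp
    · intro j _ hj
      rw [map_smul, smul_eq_mul, hb]
      simp [Ne.symm hj]
    · simp
  -- coordinate formula for g
  have hrepr : ∀ v w : V, g v w = ∑ i : Fin n,
      (if (i : ℕ) = 0 then (-1:ℝ) else 1) * (b.repr v i) * (b.repr w i) := by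
    intro v w
    conv_lhs => rw [← b.sum_repr v]
    rw [map_sum, LinearMap.sum_apply]
    refine Finset.sum_congr rfl fun i _ => ?_
    rw [map_smul, LinearMap.smul_apply, smul_eq_mul, hgb]
    ring
  -- if the time coordinate vanishes and v is null, then v = 0
  have null_zero : ∀ v : V, b.repr v i0 = 0 → g v v = 0 → v = 0 := by
    intro v h0 hnull
    rw [hrepr] at hnull
    have hterm : ∀ i ∈ (Finset.univ : Finset (Fin n)), (0:ℝ) ≤
        (if (i : ℕ) = 0 then (-1:ℝ) else 1) * (b.repr v i) * (b.repr v i) := by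
      intro i _
      by_cases hi : (i : ℕ) = 0
      · have : i = i0 := Fin.ext (hi.trans hi0.symm)
        rw [this, h0]; simp
      · simp only [hi, if_false, one_mul]
        exact mul_self_nonneg _
    have hall := (Finset.sum_eq_zero_iff_of_nonneg hterm).mp hnull
    have hz : ∀ i : Fin n, b.repr v i = 0 := by
      intro i
      by_cases hi : (i : ℕ) = 0
      · have : i = i0 := Fin.ext (hi.trans hi0.symm)
        rw [this, h0]
      · have := hall i (Finset.mem_univ i)
        simp only [hi, if_false, one_mul, mul_self_eq_zero] at this
        exact this
    have hrz : b.repr v = 0 := by ext i; exact hz i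
    exact (LinearEquiv.map_eq_zero_iff b.repr).mp hrz
  -- key: g l₁ l₂ ≠ 0
  have hpair : ∀ s t : ℝ, s • l₁ + t • l₂ = 0 → s = 0 ∧ t = 0 :=
    LinearIndependent.pair_iff.mp hind
  have hne : g l₁ l₂ ≠ 0 := by
    intro h0
    have ha : b.repr l₁ i0 ≠ 0 := by
      intro ha
      exact hl₁.1 (null_zero l₁ ha hl₁.2)
    set c := b.repr l₂ i0 with hc
    set a := b.repr l₁ i0 with haa
    have hv0 : b.repr (c • l₁ - a • l₂) i0 = 0 := by
      simp [map_sub, map_smul]; ring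
    have hvnull : g (c • l₁ - a • l₂) (c • l₁ - a • l₂) = 0 := by
      simp only [map_sub, map_smul, LinearMap.sub_apply, LinearMap.smul_apply, smul_eq_mul]
      rw [hl₁.2, hl₂.2, h0, hg_symm l₂ l₁, h0]
      ring
    have hv := null_zero _ hv0 hvnull
    have := hpair c (-a) (by rw [neg_smul, ← sub_eq_add_neg]; exact hv)
    exact ha (by simpa using this.2)
  -- reduce case (b) to case (a)
  have hA : (∀ w : V, g l₁ w = 0 → T w = 0) ∧ (∀ w : V, g l₂ w = 0 → T w = 0) := by
    rcases hcase with h | ⟨⟨h1r, h1m⟩, ⟨h2r, h2m⟩⟩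
    · exact h
    constructor
    · intro w hw
      obtain ⟨c, hcw⟩ := h1m w hw
      have h2 := h2r w
      rw [hcw] at h2
      rw [map_smul, smul_eq_mul, hg_symm l₂ l₁] at h2
      rcases mul_eq_zero.mp h2 with hc | hc
      · rw [hcw, hc, zero_smul]
      · exact absurd hc hne
    · intro w hw
      obtain ⟨c, hcw⟩ := h2m w hw
      have h2 := h1r w
      rw [hcw] at h2
      rw [map_smul, smul_eq_mul] at h2
      rcases mul_eq_zero.mp h2 with hc | hc
      · rw [hcw, hc, zero_smul]
      · exact absurd hc hne
  obtain ⟨hA1, hA2⟩ := hA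
  have hTl₂ : T l₂ = 0 := hA2 l₂ hl₂.2
  ext v
  have hw : g l₁ (v - (g l₁ v / g l₁ l₂) • l₂) = 0 := by
    rw [map_sub, map_smul, smul_eq_mul, div_mul_cancel₀ _ hne, sub_self]
  have := hA1 _ hw
  rw [map_sub, map_smul, hTl₂, smul_zero, sub_zero] at this
  simpa using this
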